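/- Consider the linear model Y_{i,t} = Z_{i,t}β* + X_{i,t}ᵀγ + ε_{i,t} with fixed Z ∈ ℝ^{N×T}, fixed controls X, and integrable random errors ε ∈ ℝ^{N×T} with E[ε] = 0. With a partition C₁,…,C_M of {1,…,N} and symmetric P ∈ ℝ^{T×T} with P² = I_T, let ε̂ = MosaicResid(Y, X), A = MosaicResid(Z, X), D = ½(A − AP), and assume ⟨D, D⟩ > 0. Then the mosaic estimator β̂_mosaic = ⟨D, ε̂⟩/⟨D, D⟩ is unbiased: E[β̂_mosaic] = β*. -/

import Mathlib

open MeasureTheory ProbabilityTheory Matrix Finset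

noncomputable section

instance matrixMeasurableSpace {α β γ : Type*} [MeasurableSpace γ] :
    MeasurableSpace (Matrix α β γ) :=
  (inferInstance : MeasurableSpace (α → β → γ))

/-- Entrywise inner product of two matrices. -/
def matInner {N T : ℕ} (U V : Matrix (Fin N) (Fin T) ℝ) : ℝ :=
  ∑ i, ∑ t, U i t * V i t

/-- Augmented design matrix for cluster `m`. -/
def augDesign {N T D M : ℕ} (X : Fin D → Matrix (Fin N) (Fin T) ℝ)
    (P : Matrix (Fin T) (Fin T) ℝ) (c : Fin N → Fin M) (m : Fin M) :
    Matrix ({i : Fin N // c i = m} × Fin T) (Fin D ⊕ Fin D) ℝ :=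
  fun p => Sum.elim (fun d => X d p.1.1 p.2) (fun d => (X d * P) p.1.1 p.2)

/-- Mosaic residuals: cluster-by-cluster OLS residuals on the augmented designs. -/
def mosaicResid {N T D M : ℕ} (X : Fin D → Matrix (Fin N) (Fin T) ℝ)
    (P : Matrix (Fin T) (Fin T) ℝ) (c : Fin N → Fin M)
    (V : Matrix (Fin N) (Fin T) ℝ) : Matrix (Fin N) (Fin T) ℝ :=
  fun i t =>
    ((1 - augDesign X P c (c i) * ((augDesign X P c (c i))ᵀ * augDesign X P c (c i))⁻¹ *
        (augDesign X P c (c i))ᵀ).mulVec (fun q => V q.1.1 q.2)) (⟨i, rfl⟩, t)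

def residMat {N T D M : ℕ} (X : Fin D → Matrix (Fin N) (Fin T) ℝ)
    (P : Matrix (Fin T) (Fin T) ℝ) (c : Fin N → Fin M) (m : Fin M) :
    Matrix ({i : Fin N // c i = m} × Fin T) ({i : Fin N // c i = m} × Fin T) ℝ :=
  1 - augDesign X P c m * ((augDesign X P c m)ᵀ * augDesign X P c m)⁻¹ * (augDesign X P c m)ᵀ

lemma mosaicResid_eq {N T D M : ℕ} (X : Fin D → Matrix (Fin N) (Fin T) ℝ)
    (P : Matrix (Fin T) (Fin T) ℝ) (c : Fin N → Fin M)
    (V : Matrix (Fin N) (Fin T) ℝ) (i : Fin N) (t : Fin T) :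
    mosaicResid X P c V i t
      = (residMat X P c (c i)).mulVec (fun q => V q.1.1 q.2) (⟨i, rfl⟩, t) := rfl

lemma residMat_mul_aug {N T D M : ℕ} (X : Fin D → Matrix (Fin N) (Fin T) ℝ)
    (P : Matrix (Fin T) (Fin T) ℝ) (c : Fin N → Fin M)
    (hrank : ∀ m : Fin M, IsUnit ((augDesign X P c m)ᵀ * augDesign X P c m)) (m : Fin M) :
    residMat X P c m * augDesign X P c m = 0 := by
  have h := (Matrix.isUnit_iff_isUnit_det _).mp (hrank m)
  rw [residMat, Matrix.sub_mul, Matrix.one_mul, Matrix.mul_assoc, Matrix.mul_assoc,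
    Matrix.nonsing_inv_mul _ h, Matrix.mul_one, sub_self]

lemma matInner_eq_trace {N T : ℕ} (U V : Matrix (Fin N) (Fin T) ℝ) :
    matInner U V = (U * Vᵀ).trace := by
  simp [matInner, Matrix.trace, Matrix.mul_apply, Matrix.diag]

/-- Decomposition of the residualized outcome. -/
lemma mosaicResid_decomp {N T D M : ℕ} (c : Fin N → Fin M)
    (Z : Matrix (Fin N) (Fin T) ℝ) (X : Fin D → Matrix (Fin N) (Fin T) ℝ)
    (βstar : ℝ) (γ : Fin D → ℝ) (E : Matrix (Fin N) (Fin T) ℝ)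
    (P : Matrix (Fin T) (Fin T) ℝ)
    (hrank : ∀ m : Fin M, IsUnit ((augDesign X P c m)ᵀ * augDesign X P c m))
    (W : Matrix (Fin N) (Fin T) ℝ)
    (hW : ∀ i t, W i t = Z i t * βstar + (∑ d, X d i t * γ d) + E i t)
    (i : Fin N) (t : Fin T) :
    mosaicResid X P c W i t = βstar * mosaicResid X P c Z i t + mosaicResid X P c E i t := by
  have hvec : (fun q : {j : Fin N // c j = c i} × Fin T => W q.1.1 q.2)
      = βstar • (fun q : {j : Fin N // c j = c i} × Fin T => Z q.1.1 q.2)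
        + (augDesign X P c (c i)).mulVec (Sum.elim γ (fun _ => 0))
        + (fun q : {j : Fin N // c j = c i} × Fin T => E q.1.1 q.2) := by
    funext q
    simp only [Pi.add_apply, Pi.smul_apply, smul_eq_mul, Matrix.mulVec, dotProduct,
      augDesign, Fintype.sum_sum_type, Sum.elim_inl, Sum.elim_inr, mul_zero,
      Finset.sum_const_zero, add_zero, hW q.1.1 q.2]
    ring
  rw [mosaicResid_eq, hvec, Matrix.mulVec_add, Matrix.mulVec_add, Matrix.mulVec_smul,
    Matrix.mulVec_mulVec, residMat_mul_aug X P c hrank, Matrix.zero_mulVec]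
  simp [mosaicResid_eq]

/-- **unbiasedness of the mosaic estimator.**
Consider `Y_{i,t} = Z_{i,t}β* + X_{i,t}ᵀγ + ε_{i,t}` with fixed `Z`, fixed controls `X`,
and integrable mean-zero errors.  With a partition into `M` clusters, `P` symmetric with
`P² = I`, `ε̂ = MosaicResid(Y, X)`, `A = MosaicResid(Z, X)`, `D = ½(A − AP)` and
`⟨D,D⟩ > 0` (full column rank of the augmented designs assumed), the mosaic estimator
`β̂ = ⟨D, ε̂⟩ / ⟨D, D⟩` satisfies `E[β̂] = β*`. -/
theorem stmt_11 {Ω : Type*} [MeasurableSpace Ω] (μ : Measure Ω) [IsProbabilityMeasure μ]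
    (N T D M : ℕ) (c : Fin N → Fin M)
    (Z : Matrix (Fin N) (Fin T) ℝ) (X : Fin D → Matrix (Fin N) (Fin T) ℝ)
    (βstar : ℝ) (γ : Fin D → ℝ)
    (ε : Ω → Matrix (Fin N) (Fin T) ℝ) (hmeas : Measurable ε)
    (hint : ∀ i t, Integrable (fun ω => ε ω i t) μ)
    (hmean : ∀ i t, ∫ ω, ε ω i t ∂μ = 0)
    (P : Matrix (Fin T) (Fin T) ℝ) (hPsymm : Pᵀ = P) (hPidem : P * P = 1)
    (hrank : ∀ m : Fin M, IsUnit ((augDesign X P c m)ᵀ * augDesign X P c m))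
    (Y : Ω → Matrix (Fin N) (Fin T) ℝ)
    (hY : ∀ ω i t, Y ω i t = Z i t * βstar + (∑ d, X d i t * γ d) + ε ω i t)
    (A : Matrix (Fin N) (Fin T) ℝ) (hA : A = mosaicResid X P c Z)
    (Dmat : Matrix (Fin N) (Fin T) ℝ) (hD : Dmat = (1 / 2 : ℝ) • (A - A * P))
    (hDD : 0 < matInner Dmat Dmat)
    (βhat : Ω → ℝ)
    (hβhat : ∀ ω, βhat ω = matInner Dmat (mosaicResid X P c (Y ω)) / matInner Dmat Dmat) :
    ∫ ω, βhat ω ∂μ = βstar := by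
  -- Step 1: ⟨D, A⟩ = ⟨D, D⟩
  have hAPt : (A * P)ᵀ = P * Aᵀ := by rw [Matrix.transpose_mul, hPsymm]
  have htr1 : ((A * P) * (A * P)ᵀ).trace = (A * Aᵀ).trace := by
    rw [hAPt, Matrix.mul_assoc, ← Matrix.mul_assoc P P, hPidem, Matrix.one_mul]
  have htr2 : (A * (A * P)ᵀ).trace = ((A * P) * Aᵀ).trace := by
    rw [hAPt, ← Matrix.mul_assoc]
  have hDA : matInner Dmat A = matInner Dmat Dmat := by
    subst hD
    rw [matInner_eq_trace, matInner_eq_trace]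
    simp only [Matrix.transpose_smul, Matrix.smul_mul, Matrix.mul_smul, Matrix.trace_smul,
      smul_eq_mul, Matrix.sub_mul, Matrix.mul_sub, Matrix.transpose_sub, Matrix.trace_sub]
    linarith [htr1, htr2]
  -- Step 2: decomposition of βhat
  have hgform : ∀ ω, βhat ω
      = βstar + matInner Dmat (mosaicResid X P c (ε ω)) / matInner Dmat Dmat := by
    intro ω
    have hdec := mosaicResid_decomp c Z X βstar γ (ε ω) P hrank (Y ω) (hY ω)
    have hsum : matInner Dmat (mosaicResid X P c (Y ω))
        = βstar * matInner Dmat A + matInner Dmat (mosaicResid X P c (ε ω)) := by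
      have h1 : ∀ i t, Dmat i t * mosaicResid X P c (Y ω) i t
          = βstar * (Dmat i t * mosaicResid X P c Z i t)
            + Dmat i t * mosaicResid X P c (ε ω) i t := by
        intro i t; rw [hdec i t]; ring
      simp only [matInner, h1, Finset.sum_add_distrib, ← Finset.mul_sum, hA]
    rw [hβhat ω, hsum, hDA, add_div, mul_div_assoc, div_self hDD.ne', mul_one]
  -- Step 3: expectation of the error part is zero
  set g : Ω → ℝ := fun ω => matInner Dmat (mosaicResid X P c (ε ω)) with hg
  have hgexp : ∀ ω, g ω = ∑ i, ∑ t, ∑ q,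
      (Dmat i t * residMat X P c (c i) (⟨i, rfl⟩, t) q) * ε ω q.1.1 q.2 := by
    intro ω
    simp only [hg, matInner, mosaicResid_eq, Matrix.mulVec, dotProduct, Finset.mul_sum,
      mul_assoc]
  have hgint : Integrable g μ := by
    rw [show g = fun ω => ∑ i, ∑ t, ∑ q,
        (Dmat i t * residMat X P c (c i) (⟨i, rfl⟩, t) q) * ε ω q.1.1 q.2 from
      funext hgexp]
    exact integrable_finset_sum _ fun i _ => integrable_finset_sum _ fun t _ =>
      integrable_finset_sum _ fun q _ => (hint q.1.1 q.2).const_mul _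
  have hgzero : ∫ ω, g ω ∂μ = 0 := by
    rw [show (fun ω => g ω) = fun ω => ∑ i, ∑ t, ∑ q,
        (Dmat i t * residMat X P c (c i) (⟨i, rfl⟩, t) q) * ε ω q.1.1 q.2 from
      funext hgexp]
    rw [integral_finset_sum _ fun i _ => integrable_finset_sum _ fun t _ =>
      integrable_finset_sum _ fun q _ => (hint q.1.1 q.2).const_mul _]
    refine Finset.sum_eq_zero fun i _ => ?_
    rw [integral_finset_sum _ fun t _ =>
      integrable_finset_sum _ fun q _ => (hint q.1.1 q.2).const_mul _]
    refine Finset.sum_eq_zero fun t _ => ?_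
    rw [integral_finset_sum _ fun q _ => (hint q.1.1 q.2).const_mul _]
    refine Finset.sum_eq_zero fun q _ => ?_
    rw [MeasureTheory.integral_const_mul, hmean, mul_zero]
  -- Step 4: put it together
  calc ∫ ω, βhat ω ∂μ = ∫ ω, (βstar + g ω / matInner Dmat Dmat) ∂μ := by
        exact integral_congr_ae (Filter.Eventually.of_forall fun ω => hgform ω)
    _ = βstar + (∫ ω, g ω ∂μ) / matInner Dmat Dmat := by
        rw [integral_add (integrable_const _) (hgint.div_const _), integral_const,
          probReal_univ, one_smul, integral_div]
    _ = βstar := by rw [hgzero, zero_div, add_zero]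

end
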